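/- Let z ∈ ℤ^d be a generating vector and n ≥ 1 a modulus, and let h_0,…,h_{n−1} ∈ ℤ^d be a family with h_ξ·z ≡ ξ (mod n) for each ξ, forming an anti-aliasing set A = {h_0,…,h_{n−1}} of cardinality n. Let v̂ : ℤ^d → ℂ be absolutely summable and set v(x) = Σ_{ℓ ∈ ℤ^d} v̂(ℓ) exp(2πi ℓ·x). Let û_a : A → ℂ be arbitrary coefficients and set u_a(x) = Σ_{h' ∈ A} û_a(h') exp(2πi h'·x). Then for every h ∈ A, the lattice-rule approximated Fourier coefficient of the product f = v·u_a satisfies (1/n) · Σ_{k=0}^{n−1} v(p_k) u_a(p_k) exp(−2πi h·p_k) = Σ_{h' ∈ A} w_{(h−h')·z mod n} · û_a(h'), where w_m := Σ_{ℓ ∈ ℤ^d, ℓ·z ≡ m (mod n)} v̂(ℓ); that is, multiplication by v acts on the coefficient vector (û_a(h_ξ))_ξ as the circulant matrix with entries W_{ξ,ξ'} = w_{(ξ−ξ') mod n}. -/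

import Mathlib

noncomputable section

/-- Integer dot product on `ℤ^d`. -/
def dotZ {d : ℕ} (h z : Fin d → ℤ) : ℤ := ∑ i, h i * z i

/-- The rank-1 lattice point `p_k = (k/n) z ∈ ℝ^d`. -/
def latPt1 {d : ℕ} (z : Fin d → ℤ) (n : ℕ) (k : Fin n) : Fin d → ℝ :=
  fun i => ((k : ℝ) / (n : ℝ)) * (z i : ℝ)

/-- The exponential `x ↦ exp(2πi h·x)`. -/
def eFun {d : ℕ} (h : Fin d → ℤ) (x : Fin d → ℝ) : ℂ :=
  Complex.exp (2 * Real.pi * Complex.I * ∑ i, (h i : ℂ) * (x i : ℂ))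

lemma normE (n : ℕ) (k : ℕ) (m : ℤ) :
    ‖Complex.exp (2 * Real.pi * Complex.I * (k:ℂ) * (m:ℂ) / (n:ℂ))‖ = 1 := by
  have h : 2 * Real.pi * Complex.I * (k:ℂ) * (m:ℂ) / (n:ℂ)
      = ((2 * Real.pi * k * m / n : ℝ) : ℂ) * Complex.I := by push_cast; ring
  rw [h, Complex.norm_exp_ofReal_mul_I]

lemma expE_add3 (n : ℕ) (k : ℕ) (a b c : ℤ) :
    Complex.exp (2*Real.pi*Complex.I*(k:ℂ)*((a:ℤ):ℂ)/(n:ℂ)) *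
      Complex.exp (2*Real.pi*Complex.I*(k:ℂ)*((b:ℤ):ℂ)/(n:ℂ)) *
      Complex.exp (2*Real.pi*Complex.I*(k:ℂ)*((c:ℤ):ℂ)/(n:ℂ))
    = Complex.exp (2*Real.pi*Complex.I*(k:ℂ)*(((a+b+c:ℤ)):ℂ)/(n:ℂ)) := by
  rw [← Complex.exp_add, ← Complex.exp_add]; congr 1; push_cast; ring

lemma expE_add (n : ℕ) (k : ℕ) (a b : ℤ) :
    Complex.exp (2*Real.pi*Complex.I*(k:ℂ)*((a:ℤ):ℂ)/(n:ℂ)) *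
      Complex.exp (2*Real.pi*Complex.I*(k:ℂ)*((b:ℤ):ℂ)/(n:ℂ))
    = Complex.exp (2*Real.pi*Complex.I*(k:ℂ)*(((a+b:ℤ)):ℂ)/(n:ℂ)) := by
  rw [← Complex.exp_add]; congr 1; push_cast; ring

lemma charSum (n : ℕ) (hn : 1 ≤ n) (m : ℤ) :
    ∑ k : Fin n, Complex.exp (2*Real.pi*Complex.I*((k:ℕ):ℂ)*(m:ℂ)/(n:ℂ))
      = if ((m : ZMod n) = 0) then (n:ℂ) else 0 := by
  have hn0 : (n:ℂ) ≠ 0 := Nat.cast_ne_zero.mpr (by omega)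
  by_cases hd : (m : ZMod n) = 0
  · obtain ⟨t, ht⟩ := (ZMod.intCast_zmod_eq_zero_iff_dvd m n).mp hd
    simp only [hd, if_true]
    have : ∀ k : Fin n, Complex.exp (2*Real.pi*Complex.I*((k:ℕ):ℂ)*(m:ℂ)/(n:ℂ)) = 1 := by
      intro k
      rw [show 2*Real.pi*Complex.I*((k:ℕ):ℂ)*(m:ℂ)/(n:ℂ)
          = (((k:ℕ)*t : ℤ) : ℂ) * (2*Real.pi*Complex.I) from by
        rw [ht]; push_cast; field_simp]
      exact Complex.exp_int_mul_two_pi_mul_I _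
    simp [this]
  · simp only [hd, if_false]
    set r : ℂ := Complex.exp (2*Real.pi*Complex.I*(m:ℂ)/(n:ℂ)) with hr
    have hterm : ∀ k : Fin n, Complex.exp (2*Real.pi*Complex.I*((k:ℕ):ℂ)*(m:ℂ)/(n:ℂ)) = r ^ (k:ℕ) := by
      intro k
      rw [hr, ← Complex.exp_nat_mul]
      congr 1; ring
    rw [Finset.sum_congr rfl (fun k _ => hterm k), Fin.sum_univ_eq_sum_range]
    have hrn : r ^ n = 1 := by
      rw [hr, ← Complex.exp_nat_mul,
        show (n:ℂ) * (2*Real.pi*Complex.I*(m:ℂ)/(n:ℂ)) = (m:ℂ) * (2*Real.pi*Complex.I) from by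
          field_simp]
      exact Complex.exp_int_mul_two_pi_mul_I m
    have hr1 : r ≠ 1 := by
      intro h1
      obtain ⟨t, ht⟩ := Complex.exp_eq_one_iff.mp (hr ▸ h1)
      apply hd
      rw [ZMod.intCast_zmod_eq_zero_iff_dvd]
      refine ⟨t, ?_⟩
      have : (m:ℂ) = (n:ℂ) * (t:ℂ) := by
        have hpi : (Real.pi:ℂ) ≠ 0 := by exact_mod_cast Real.pi_ne_zero
        have hI := Complex.I_ne_zero
        field_simp at ht
        have h2 : (2*(Real.pi:ℂ)*Complex.I) ≠ 0 :=
          mul_ne_zero (mul_ne_zero two_ne_zero hpi) hI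
        linear_combination ht
      exact_mod_cast this
    rw [geom_sum_eq hr1, hrn]
    simp

lemma eFun_latPt {d : ℕ} (h z : Fin d → ℤ) (n : ℕ) (k : Fin n) :
    eFun h (latPt1 z n k)
      = Complex.exp (2*Real.pi*Complex.I*((k:ℕ):ℂ)*((dotZ h z : ℤ):ℂ)/(n:ℂ)) := by
  unfold eFun latPt1 dotZ
  congr 1
  push_cast
  rw [Finset.mul_sum, mul_div_assoc, Finset.sum_div, Finset.mul_sum]
  exact Finset.sum_congr rfl fun i _ => by ring

lemma eFun_neg {d : ℕ} (h : Fin d → ℤ) (x : Fin d → ℝ) : eFun h (-x) = eFun (-h) x := by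
  unfold eFun
  congr 1
  congr 1
  refine Finset.sum_congr rfl fun i _ => ?_
  simp only [Pi.neg_apply]
  push_cast
  ring

lemma dotZ_neg {d : ℕ} (h z : Fin d → ℤ) : dotZ (-h) z = -(dotZ h z) := by
  simp [dotZ]

lemma eFun_neg_latPt {d : ℕ} (h z : Fin d → ℤ) (n : ℕ) (k : Fin n) :
    eFun h (-(latPt1 z n k))
      = Complex.exp (2*Real.pi*Complex.I*((k:ℕ):ℂ)*(((-(dotZ h z) : ℤ)):ℂ)/(n:ℂ)) := by
  rw [eFun_neg, eFun_latPt, dotZ_neg]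

/-- **Multiplication operator on rank-1 lattices.** With `h_0, …, h_{n−1}` an
anti-aliasing family (`h_ξ·z ≡ ξ (mod n)`), `v` with absolutely summable
Fourier coefficients `v̂`, and a trigonometric polynomial `u_a` supported on the
family, the lattice-rule approximated Fourier coefficient of `f = v·u_a` at
`h = h_{ξ₀}` is `Σ_{ξ'} w_{(ξ₀−ξ') mod n} û_a(ξ')`, where
`w_m = Σ_{ℓ·z ≡ m (mod n)} v̂(ℓ)`; i.e. multiplication by `v` acts on the
coefficients as the circulant matrix `W_{ξ,ξ'} = w_{(ξ−ξ') mod n}`. -/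
theorem rank1_multiplication_operator
    (d : ℕ) (z : Fin d → ℤ) (n : ℕ) (hn : 1 ≤ n)
    (hfam : Fin n → Fin d → ℤ)
    (hcong : ∀ ξ : Fin n, ((dotZ (hfam ξ) z : ZMod n)) = ((ξ : ℕ) : ZMod n))
    (vhat : (Fin d → ℤ) → ℂ) (hv : Summable fun ℓ : Fin d → ℤ => ‖vhat ℓ‖)
    (v : (Fin d → ℝ) → ℂ) (hvdef : ∀ x, v x = ∑' ℓ : Fin d → ℤ, vhat ℓ * eFun ℓ x)
    (uahat : Fin n → ℂ)
    (ua : (Fin d → ℝ) → ℂ)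
    (hua : ∀ x, ua x = ∑ ξ : Fin n, uahat ξ * eFun (hfam ξ) x)
    (w : ZMod n → ℂ)
    (hw : ∀ m : ZMod n,
      w m = ∑' ℓ : {ℓ : Fin d → ℤ // ((dotZ ℓ z : ZMod n)) = m}, vhat ℓ.1)
    (ξ₀ : Fin n) :
    (1 / (n : ℂ)) *
        ∑ k : Fin n, v (latPt1 z n k) * ua (latPt1 z n k) * eFun (hfam ξ₀) (-(latPt1 z n k))
      = ∑ ξ' : Fin n, w (((ξ₀ : ℕ) : ZMod n) - ((ξ' : ℕ) : ZMod n)) * uahat ξ' := by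
  classical
  have hn0 : (n:ℂ) ≠ 0 := Nat.cast_ne_zero.mpr (by omega)
  have hvS : Summable vhat := hv.of_norm
  set E : Fin n → ℤ → ℂ :=
    fun k m => Complex.exp (2*Real.pi*Complex.I*((k:ℕ):ℂ)*((m:ℤ):ℂ)/(n:ℂ)) with hE
  -- summability of the generic terms
  have hsumm2 : ∀ (k : Fin n) (c : ℂ) (g : (Fin d → ℤ) → ℤ),
      Summable (fun ℓ : Fin d → ℤ => vhat ℓ * c * E k (g ℓ)) := by
    intro k c g
    apply Summable.of_norm_bounded (hv.mul_right ‖c‖)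
    intro ℓ
    rw [norm_mul, norm_mul, hE]
    simp only
    rw [normE]
    simp
  -- Step 1: expand each lattice-point evaluation
  have step1 : ∀ k : Fin n,
      v (latPt1 z n k) * ua (latPt1 z n k) * eFun (hfam ξ₀) (-(latPt1 z n k))
      = ∑ ξ' : Fin n, ∑' ℓ : Fin d → ℤ,
          vhat ℓ * E k (dotZ ℓ z) *
            (uahat ξ' * E k (dotZ (hfam ξ') z) * E k (-(dotZ (hfam ξ₀) z))) := by
    intro k
    rw [hvdef, hua, eFun_neg_latPt]
    have hv' : (∑' ℓ : Fin d → ℤ, vhat ℓ * eFun ℓ (latPt1 z n k))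
        = ∑' ℓ : Fin d → ℤ, vhat ℓ * E k (dotZ ℓ z) :=
      tsum_congr fun ℓ => by rw [eFun_latPt, hE]
    have hu' : (∑ ξ' : Fin n, uahat ξ' * eFun (hfam ξ') (latPt1 z n k))
        = ∑ ξ' : Fin n, uahat ξ' * E k (dotZ (hfam ξ') z) :=
      Finset.sum_congr rfl fun ξ' _ => by rw [eFun_latPt, hE]
    rw [hv', hu']
    rw [Finset.mul_sum, Finset.sum_mul]
    refine Finset.sum_congr rfl fun ξ' _ => ?_
    rw [mul_assoc, ← tsum_mul_right]
  -- Step 2: evaluate the inner sums for fixed ξ'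
  have step2 : ∀ ξ' : Fin n,
      (1/(n:ℂ)) * ∑ k : Fin n, ∑' ℓ : Fin d → ℤ,
          vhat ℓ * E k (dotZ ℓ z) *
            (uahat ξ' * E k (dotZ (hfam ξ') z) * E k (-(dotZ (hfam ξ₀) z)))
      = w (((ξ₀ : ℕ) : ZMod n) - ((ξ' : ℕ) : ZMod n)) * uahat ξ' := by
    intro ξ'
    set t : ZMod n := ((ξ₀ : ℕ) : ZMod n) - ((ξ' : ℕ) : ZMod n) with hts
    set M : (Fin d → ℤ) → ℤ :=
      fun ℓ => dotZ ℓ z + dotZ (hfam ξ') z + -(dotZ (hfam ξ₀) z) with hM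
    have hterm : ∀ (k : Fin n) (ℓ : Fin d → ℤ),
        vhat ℓ * E k (dotZ ℓ z) *
            (uahat ξ' * E k (dotZ (hfam ξ') z) * E k (-(dotZ (hfam ξ₀) z)))
        = vhat ℓ * uahat ξ' * E k (M ℓ) := by
      intro k ℓ
      rw [hE, hM]
      simp only
      rw [← expE_add3]
      ring
    have hcond : ∀ ℓ : Fin d → ℤ,
        (((M ℓ : ℤ) : ZMod n) = 0) ↔ ((dotZ ℓ z : ZMod n) = t) := by
      intro ℓ
      rw [hM, hts]
      push_cast
      rw [hcong ξ', hcong ξ₀]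
      constructor
      · intro h; linear_combination h
      · intro h; linear_combination h
    calc (1/(n:ℂ)) * ∑ k : Fin n, ∑' ℓ : Fin d → ℤ,
          vhat ℓ * E k (dotZ ℓ z) *
            (uahat ξ' * E k (dotZ (hfam ξ') z) * E k (-(dotZ (hfam ξ₀) z)))
        = (1/(n:ℂ)) * ∑ k : Fin n, ∑' ℓ : Fin d → ℤ, vhat ℓ * uahat ξ' * E k (M ℓ) := by
          rw [Finset.sum_congr rfl fun k _ => tsum_congr fun ℓ => hterm k ℓ]
      _ = (1/(n:ℂ)) * ∑' ℓ : Fin d → ℤ, ∑ k : Fin n, vhat ℓ * uahat ξ' * E k (M ℓ) := by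
          rw [← Summable.tsum_finsetSum fun k _ => hsumm2 k (uahat ξ') M]
      _ = (1/(n:ℂ)) * ∑' ℓ : Fin d → ℤ,
            vhat ℓ * uahat ξ' * (if (((M ℓ : ℤ) : ZMod n) = 0) then (n:ℂ) else 0) := by
          congr 1
          refine tsum_congr fun ℓ => ?_
          rw [← Finset.mul_sum, hE]
          simp only
          rw [charSum n hn]
      _ = (1/(n:ℂ)) * ∑' ℓ : Fin d → ℤ,
            (n:ℂ) * (uahat ξ' * (if ((dotZ ℓ z : ZMod n) = t) then vhat ℓ else 0)) := by
          congr 1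
          refine tsum_congr fun ℓ => ?_
          by_cases hc : ((M ℓ : ℤ) : ZMod n) = 0
          · rw [if_pos hc, if_pos ((hcond ℓ).mp hc)]; ring
          · rw [if_neg hc, if_neg (fun h => hc ((hcond ℓ).mpr h))]; ring
      _ = (1/(n:ℂ)) * ((n:ℂ) * (uahat ξ' *
            ∑' ℓ : Fin d → ℤ, (if ((dotZ ℓ z : ZMod n) = t) then vhat ℓ else 0))) := by
          rw [tsum_mul_left, tsum_mul_left]
      _ = uahat ξ' * ∑' ℓ : Fin d → ℤ, (if ((dotZ ℓ z : ZMod n) = t) then vhat ℓ else 0) := by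
          field_simp
      _ = uahat ξ' * w t := by
          congr 1
          rw [hw t]
          have hsub := tsum_subtype {ℓ : Fin d → ℤ | (dotZ ℓ z : ZMod n) = t} vhat
          refine Eq.trans ?_ hsub.symm
          refine tsum_congr fun ℓ => ?_
          simp [Set.indicator_apply]
      _ = w t * uahat ξ' := mul_comm _ _
  rw [Finset.sum_congr rfl fun k _ => step1 k, Finset.sum_comm, Finset.mul_sum]
  exact Finset.sum_congr rfl fun ξ' _ => step2 ξ'

end
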